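/- Let C be a self-dual Z4-code of length n. Then the residue code C^(1) is a doubly even binary code (every codeword of C^(1) has Hamming weight divisible by 4), and C^(1) equals the dual code of the torsion code C^(2), i.e., C^(1) = (C^(2))^⊥ in F₂ⁿ. -/

import Mathlib

open Finset

def z4Inner {n : ℕ} (x y : Fin n → ZMod 4) : ZMod 4 := ∑ i, x i * y i

def z4Dual {n : ℕ} (C : Set (Fin n → ZMod 4)) : Set (Fin n → ZMod 4) :=
  {x | ∀ c ∈ C, z4Inner x c = 0}

def IsSelfDualZ4 {n : ℕ} (C : Set (Fin n → ZMod 4)) : Prop := C = z4Dual C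

def euclWt {n : ℕ} (x : Fin n → ZMod 4) : ℕ :=
  ∑ i, (if x i = 0 then 0 else if x i = 2 then 4 else 1)

def IsTypeIIZ4 {n : ℕ} (C : Set (Fin n → ZMod 4)) : Prop :=
  IsSelfDualZ4 C ∧ ∀ c ∈ C, 8 ∣ euclWt c

def IsExtremalTypeIIZ4 (n : ℕ) (C : Set (Fin n → ZMod 4)) : Prop :=
  IsTypeIIZ4 C ∧ sInf (euclWt '' (C \ {0})) = 8 * (n / 24) + 8

def IsEvenVec {n : ℕ} (x : Fin n → ZMod 4) : Prop := ∀ i, x i = 0 ∨ x i = 2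

def Sset {n : ℕ} (w : Fin n → ZMod 4) (a : ZMod 4) : Finset (Fin n) :=
  Finset.univ.filter (fun j => w j = a)

def doubled {n : ℕ} (C : Set (Fin n → ZMod 4)) (tu : Fin n → ZMod 4) :
    Set (Fin n → ZMod 4) :=
  {w | ∃ v ∈ C, z4Inner tu v = 0 ∧ ∃ a : ZMod 4, w = v + a • tu}

def bInner {n : ℕ} (x y : Fin n → ZMod 2) : ZMod 2 := ∑ i, x i * y i

def bDual {n : ℕ} (D : Set (Fin n → ZMod 2)) : Set (Fin n → ZMod 2) :=
  {x | ∀ y ∈ D, bInner x y = 0}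

def hWt {n : ℕ} (x : Fin n → ZMod 2) : ℕ := (Finset.univ.filter fun i => x i ≠ 0).card

def IsTypeIIBin {n : ℕ} (D : Set (Fin n → ZMod 2)) : Prop :=
  D = bDual D ∧ ∀ y ∈ D, 4 ∣ hWt y

def IsExtremalTypeIIBin (n : ℕ) (D : Set (Fin n → ZMod 2)) : Prop :=
  IsTypeIIBin D ∧ sInf (hWt '' (D \ {0})) = 4 * (n / 24) + 4

def residueSet {n : ℕ} (C : Set (Fin n → ZMod 4)) : Set (Fin n → ZMod 2) :=
  {y | ∃ c ∈ C, y = fun i => ZMod.castHom (by norm_num : (2:ℕ) ∣ 4) (ZMod 2) (c i)}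

def torsionSet {n : ℕ} (C : Set (Fin n → ZMod 4)) : Set (Fin n → ZMod 2) :=
  {c | (fun i => 2 * ((c i).val : ZMod 4)) ∈ C}

def rInner {n : ℕ} (x y : Fin n → ℝ) : ℝ := ∑ i, x i * y i

def A4lattice {n : ℕ} (C : Set (Fin n → ZMod 4)) : Set (Fin n → ℝ) :=
  {x | ∃ z : Fin n → ℤ, (∀ i, 2 * x i = (z i : ℝ)) ∧ (fun i => (z i : ZMod 4)) ∈ C}

def dualLattice {n : ℕ} (L : Set (Fin n → ℝ)) : Set (Fin n → ℝ) :=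
  {y | ∀ x ∈ L, ∃ m : ℤ, rInner x y = (m : ℝ)}

def IsIntegralLattice {n : ℕ} (L : Set (Fin n → ℝ)) : Prop :=
  ∀ x ∈ L, ∀ y ∈ L, ∃ m : ℤ, rInner x y = (m : ℝ)

def IsEvenLattice {n : ℕ} (L : Set (Fin n → ℝ)) : Prop :=
  IsIntegralLattice L ∧ ∀ x ∈ L, ∃ m : ℤ, rInner x x = 2 * (m : ℝ)

def IsUnimodularLattice {n : ℕ} (L : Set (Fin n → ℝ)) : Prop :=
  IsIntegralLattice L ∧ L = dualLattice L

def MonomiallyEquiv {n : ℕ} (C D : Set (Fin n → ZMod 4)) : Prop :=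
  ∃ (σ : Equiv.Perm (Fin n)) (ε : Fin n → ZMod 4), (∀ i, ε i = 1 ∨ ε i = 3) ∧
    D = (fun x => fun i => ε i * x (σ i)) '' C

section Aux

variable {n : ℕ}

/-- reduction mod 2 -/
def pr : ZMod 4 →+* ZMod 2 := ZMod.castHom (show (2:ℕ) ∣ 4 by norm_num) (ZMod 2)

/-- the additive map b ↦ 2·b̂ from ZMod 2 to ZMod 4 -/
def g2 : ZMod 2 →+ ZMod 4 where
  toFun b := 2 * ((b.val : ZMod 4))
  map_zero' := by decide
  map_add' := by decide

lemma g2_eq_zero_iff (b : ZMod 2) : g2 b = 0 ↔ b = 0 := by revert b; decide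

lemma pointwise_key (a : ZMod 4) (b : ZMod 2) :
    a * (2 * ((b.val : ZMod 4))) = g2 (pr a * b) := by revert a b; decide

lemma z4Inner_comm (x y : Fin n → ZMod 4) : z4Inner x y = z4Inner y x := by
  simp [z4Inner, mul_comm]

lemma bInner_comm (x y : Fin n → ZMod 2) : bInner x y = bInner y x := by
  simp [bInner, mul_comm]

lemma inner_two (c : Fin n → ZMod 4) (t : Fin n → ZMod 2) :
    z4Inner c (fun i => 2 * (((t i).val : ZMod 4))) = g2 (bInner (fun i => pr (c i)) t) := by
  unfold z4Inner bInner
  rw [map_sum]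
  exact Finset.sum_congr rfl fun i _ => pointwise_key (c i) (t i)

/-- the residue code as a submodule over `ZMod 2` -/
def resSub (C : Submodule (ZMod 4) (Fin n → ZMod 4)) :
    Submodule (ZMod 2) (Fin n → ZMod 2) where
  carrier := residueSet (C : Set (Fin n → ZMod 4))
  zero_mem' := ⟨0, C.zero_mem, by funext i; simp [pr]⟩
  add_mem' := by
    rintro x y ⟨c, hc, rfl⟩ ⟨d, hd, rfl⟩
    exact ⟨c + d, C.add_mem hc hd, by funext i; simp only [Pi.add_apply, map_add]⟩
  smul_mem' := by
    intro a x hx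
    have ha : a = 0 ∨ a = 1 := by revert a; decide
    rcases ha with rfl | rfl
    · rw [zero_smul]; exact (⟨0, C.zero_mem, by funext i; simp [pr]⟩ :
        (0 : Fin n → ZMod 2) ∈ residueSet (C : Set (Fin n → ZMod 4)))
    · simpa using hx

/-- the standard bilinear form on `F₂ⁿ` -/
def bForm (n : ℕ) : LinearMap.BilinForm (ZMod 2) (Fin n → ZMod 2) :=
  LinearMap.mk₂ (ZMod 2) (fun x y => ∑ i, x i * y i)
    (fun m₁ m₂ nn => by simp [add_mul, Finset.sum_add_distrib])
    (fun c m nn => by simp [Finset.mul_sum, mul_assoc])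
    (fun m n₁ n₂ => by simp [mul_add, Finset.sum_add_distrib])
    (fun c m nn => by simp [Finset.mul_sum, mul_left_comm])

lemma bForm_apply (x y : Fin n → ZMod 2) : bForm n x y = bInner x y := rfl

lemma bForm_nondeg : (bForm n).Nondegenerate := by
  refine (LinearMap.IsRefl.nondegenerate_iff_separatingLeft (B := bForm n)
    (fun x y h => by rw [bForm_apply, bInner_comm] at h; exact h)).mpr ?_
  intro x hx
  funext i
  have := hx (Pi.single i 1)
  rw [bForm_apply, bInner] at this
  simpa [Pi.single_apply, mul_ite, Finset.sum_ite_eq'] using this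

lemma bForm_refl : (bForm n).IsRefl := by
  intro x y h
  rw [bForm_apply, bInner_comm] at h
  exact h

lemma torsion_eq_orth (C : Submodule (ZMod 4) (Fin n → ZMod 4))
    (hsd : IsSelfDualZ4 (C : Set (Fin n → ZMod 4))) :
    torsionSet (C : Set (Fin n → ZMod 4)) = ((bForm n).orthogonal (resSub C) : Set _) := by
  ext t
  constructor
  · rintro ht y ⟨c, hc, rfl⟩
    have hc' : c ∈ z4Dual (C : Set (Fin n → ZMod 4)) := hsd ▸ hc
    have h0 : z4Inner c (fun i => 2 * (((t i).val : ZMod 4))) = 0 := hc' _ ht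
    rw [inner_two, g2_eq_zero_iff] at h0
    exact h0
  · intro ht
    show (fun i => 2 * (((t i).val : ZMod 4))) ∈ (C : Set (Fin n → ZMod 4))
    rw [hsd]
    intro c hc
    rw [z4Inner_comm, inner_two, g2_eq_zero_iff]
    exact ht _ ⟨c, hc, rfl⟩

end Aux

theorem stmt9 {n : ℕ} (C : Submodule (ZMod 4) (Fin n → ZMod 4))
    (hsd : IsSelfDualZ4 (C : Set (Fin n → ZMod 4))) :
    (∀ y ∈ residueSet (C : Set (Fin n → ZMod 4)), 4 ∣ hWt y) ∧
      residueSet (C : Set (Fin n → ZMod 4)) = bDual (torsionSet (C : Set (Fin n → ZMod 4))) := by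
  constructor
  · rintro y ⟨c, hc, rfl⟩
    have hc' : c ∈ z4Dual (C : Set (Fin n → ZMod 4)) := hsd ▸ hc
    have h0 : z4Inner c c = 0 := hc' c hc
    have hpt : ∀ a : ZMod 4,
        (if pr a ≠ 0 then (1 : ZMod 4) else 0) = a * a := by decide
    have hcast : ((hWt fun i => ZMod.castHom (by norm_num : (2:ℕ) ∣ 4) (ZMod 2) (c i) : ℕ) :
        ZMod 4) = 0 := by
      rw [hWt, ← Finset.sum_boole]
      calc (∑ i, if (ZMod.castHom (by norm_num : (2:ℕ) ∣ 4) (ZMod 2) (c i)) ≠ 0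
              then (1 : ZMod 4) else 0)
          = ∑ i, c i * c i := Finset.sum_congr rfl fun i _ => hpt (c i)
        _ = 0 := h0
    exact (ZMod.natCast_eq_zero_iff _ 4).mp hcast
  · have hres : residueSet (C : Set (Fin n → ZMod 4)) = (resSub C : Set _) := rfl
    have hdd := LinearMap.BilinForm.orthogonal_orthogonal bForm_nondeg bForm_refl (resSub C)
    rw [hres, ← hdd]
    ext x
    simp only [SetLike.mem_coe, LinearMap.BilinForm.mem_orthogonal_iff, bDual,
      Set.mem_setOf_eq]
    constructor
    · intro hx t ht
      rw [torsion_eq_orth C hsd] at ht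
      have := hx t ht
      rw [bForm_apply, bInner_comm] at this
      exact this
    · intro hx t ht
      have ht' : t ∈ torsionSet (C : Set (Fin n → ZMod 4)) := by
        rw [torsion_eq_orth C hsd]; exact ht
      rw [bForm_apply, bInner_comm]
      exact hx t ht'
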